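/- arXiv:1208.5727 — 6 statements merged into one kernel-verified Lean document; each statement's English description precedes it below -/
import Mathlib

section
/- The function V is strictly decreasing on (0,∞) and tends to 0 as s → ∞; consequently V(s) > 0 for every s > 0. -/
open Real Filter

/-- The wall-interaction energy `V(s) = (1/π)·s·coth(πs) − (1/π²)·log(2·sinh(πs))`. -/
noncomputable def V (s : ℝ) : ℝ :=
  (1 / Real.pi) * s * (Real.cosh (Real.pi * s) / Real.sinh (Real.pi * s))
    - (1 / Real.pi ^ 2) * Real.log (2 * Real.sinh (Real.pi * s))

noncomputable def W (s : ℝ) : ℝ :=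
  (2 * s * Real.exp (-(2 * Real.pi * s))) / (Real.pi * (1 - Real.exp (-(2 * Real.pi * s))))
    - (1 / Real.pi ^ 2) * Real.log (1 - Real.exp (-(2 * Real.pi * s)))

lemma V_eq_W {s : ℝ} (hs : 0 < s) : V s = W s := by
  have hpi := Real.pi_pos
  have hps : 0 < Real.pi * s := by positivity
  have hS : 0 < Real.sinh (Real.pi * s) := Real.sinh_pos_iff.2 hps
  have he1 : Real.exp (-(2 * Real.pi * s)) < 1 := Real.exp_lt_one_iff.2 (by nlinarith)
  have he1' : 0 < 1 - Real.exp (-(2 * Real.pi * s)) := by linarith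
  have hmul : Real.exp (Real.pi * s) * Real.exp (-(2 * Real.pi * s))
      = Real.exp (-(Real.pi * s)) := by
    rw [← Real.exp_add]; congr 1; ring
  have hkey : 2 * Real.sinh (Real.pi * s)
      = Real.exp (Real.pi * s) * (1 - Real.exp (-(2 * Real.pi * s))) := by
    rw [Real.sinh_eq]; linear_combination hmul
  have hlog : Real.log (2 * Real.sinh (Real.pi * s))
      = Real.pi * s + Real.log (1 - Real.exp (-(2 * Real.pi * s))) := by
    rw [hkey, Real.log_mul (Real.exp_ne_zero _) he1'.ne', Real.log_exp]
  have h2 : Real.exp (Real.pi * s) * Real.exp (-(Real.pi * s)) = 1 := by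
    rw [← Real.exp_add]; simp
  have h3 : Real.exp (-(2 * Real.pi * s)) = Real.exp (-(Real.pi * s)) ^ 2 := by
    rw [sq, ← Real.exp_add]; congr 1; ring
  have hE : 0 < Real.exp (Real.pi * s) - Real.exp (-(Real.pi * s)) := by
    have := Real.sinh_eq (Real.pi * s); nlinarith
  have hcosh : Real.cosh (Real.pi * s) / Real.sinh (Real.pi * s)
      = 1 + 2 * Real.exp (-(2 * Real.pi * s)) / (1 - Real.exp (-(2 * Real.pi * s))) := by
    rw [Real.cosh_eq, Real.sinh_eq, h3]
    have hE2 : 1 - Real.exp (-(Real.pi * s)) ^ 2 ≠ 0 := by rw [h3] at he1'; linarith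
    field_simp
    linear_combination (-2 * Real.exp (-(Real.pi * s))) * h2
  unfold V W
  rw [hlog, hcosh]
  field_simp
  ring

lemma W_tendsto : Tendsto W atTop (nhds 0) := by
  have hpi := Real.pi_pos
  have h2pis : Tendsto (fun s : ℝ => 2 * Real.pi * s) atTop atTop :=
    tendsto_id.const_mul_atTop (by positivity)
  have hexp : Tendsto (fun s : ℝ => Real.exp (-(2 * Real.pi * s))) atTop (nhds 0) :=
    Real.tendsto_exp_atBot.comp (tendsto_neg_atTop_atBot.comp h2pis)
  have h1 : Tendsto (fun x : ℝ => x * Real.exp (-x)) atTop (nhds 0) := by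
    simpa using Real.tendsto_pow_mul_exp_neg_atTop_nhds_zero 1
  have hnum : Tendsto (fun s : ℝ => 2 * s * Real.exp (-(2 * Real.pi * s))) atTop (nhds 0) := by
    have h0 := (h1.comp h2pis).const_mul (1 / Real.pi)
    rw [mul_zero] at h0
    refine h0.congr fun s => ?_
    simp only [Function.comp]
    field_simp
  have hden : Tendsto (fun s : ℝ => Real.pi * (1 - Real.exp (-(2 * Real.pi * s)))) atTop
      (nhds Real.pi) := by
    have := ((tendsto_const_nhds : Tendsto (fun _ : ℝ => (1:ℝ)) atTop _).sub hexp).const_mul Real.pi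
    simpa [W, one_div] using this
  have hfrac := hnum.div hden hpi.ne'
  rw [zero_div] at hfrac
  have hlog : Tendsto (fun s : ℝ => Real.log (1 - Real.exp (-(2 * Real.pi * s)))) atTop
      (nhds 0) := by
    have hc : Tendsto (fun s : ℝ => 1 - Real.exp (-(2 * Real.pi * s))) atTop (nhds 1) := by
      simpa using (tendsto_const_nhds : Tendsto (fun _ : ℝ => (1:ℝ)) atTop _).sub hexp
    have := (Real.continuousAt_log (by norm_num : (1:ℝ) ≠ 0)).tendsto.comp hc
    simpa [W, one_div, Function.comp_def] using this
  have h := hfrac.sub (hlog.const_mul (1 / Real.pi ^ 2))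
  rw [mul_zero, sub_zero] at h
  exact h.congr fun x => by simp only [W, Pi.div_apply]

lemma V_hasDerivAt {x : ℝ} (hx : 0 < x) :
    HasDerivAt V (-x / Real.sinh (Real.pi * x) ^ 2) x := by
  have hpi := Real.pi_pos
  have hS : 0 < Real.sinh (Real.pi * x) := Real.sinh_pos_iff.2 (by positivity)
  have hs : Real.sinh (Real.pi * x) ≠ 0 := hS.ne'
  have hA : HasDerivAt (fun s : ℝ => Real.pi * s) Real.pi x := by
    simpa using (hasDerivAt_id x).const_mul Real.pi
  have hsinh := hA.sinh
  have hcosh := hA.cosh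
  have hdiv := hcosh.div hsinh hs
  have hlin : HasDerivAt (fun s : ℝ => (1 / Real.pi) * s) (1 / Real.pi) x := by
    simpa using (hasDerivAt_id x).const_mul (1 / Real.pi)
  have hterm1 := hlin.mul hdiv
  have h2s : HasDerivAt (fun s : ℝ => 2 * Real.sinh (Real.pi * s))
      (2 * (Real.cosh (Real.pi * x) * Real.pi)) x := hsinh.const_mul 2
  have hlog := (h2s.log (by positivity)).const_mul (1 / Real.pi ^ 2)
  have hsum := hterm1.sub hlog
  convert hsum using 1
  · rfl
  · rfl
  · rfl
  have hid : Real.cosh (Real.pi * x) ^ 2 - Real.sinh (Real.pi * x) ^ 2 = 1 :=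
    Real.cosh_sq_sub_sinh_sq (Real.pi * x)
  have h : Real.sinh (Real.pi * x) * Real.pi * Real.sinh (Real.pi * x)
      - Real.cosh (Real.pi * x) * (Real.cosh (Real.pi * x) * Real.pi) = -Real.pi := by
    linear_combination (-Real.pi) * hid
  rw [h]
  simp only [Pi.div_apply]
  field_simp
  ring

lemma V_strictAntiOn : StrictAntiOn V (Set.Ioi 0) := by
  apply strictAntiOn_of_deriv_neg (convex_Ioi 0)
  · intro x hx
    exact (V_hasDerivAt hx).continuousAt.continuousWithinAt
  · intro x hx
    rw [interior_Ioi] at hx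
    rw [(V_hasDerivAt hx).deriv]
    have hx' : (0:ℝ) < x := hx
    have hS : 0 < Real.sinh (Real.pi * x) :=
      Real.sinh_pos_iff.2 (by positivity)
    exact div_neg_of_neg_of_pos (by linarith) (by positivity)

lemma V_tendsto : Tendsto V atTop (nhds 0) := by
  refine W_tendsto.congr' ?_
  filter_upwards [eventually_gt_atTop (0:ℝ)] with s hs
  exact (V_eq_W hs).symm

/-- `V` is strictly decreasing on `(0,∞)`, tends to `0` at infinity, and hence is
positive on `(0,∞)`. -/
theorem stmt1 :
    StrictAntiOn V (Set.Ioi 0) ∧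
    Tendsto V atTop (nhds 0) ∧
    ∀ s : ℝ, 0 < s → 0 < V s := by
  refine ⟨V_strictAntiOn, V_tendsto, fun s hs => ?_⟩
  have h1 : V (s + 1) < V s :=
    V_strictAntiOn (Set.mem_Ioi.2 hs) (Set.mem_Ioi.2 (by linarith)) (by linarith)
  have h2 : 0 ≤ V (s + 1) := by
    refine le_of_tendsto V_tendsto ?_
    filter_upwards [eventually_ge_atTop (s + 1)] with t ht
    rcases eq_or_lt_of_le ht with rfl | hlt
    · exact le_rfl
    · exact (V_strictAntiOn (Set.mem_Ioi.2 (by linarith)) (Set.mem_Ioi.2 (by linarith)) hlt).le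
  linarith
end

section
/- As s → 0⁺, V(s) + (1/π²)·log s converges to (1 − log(2π))/π²; that is, V(s) has the asymptotic behaviour V(s) ∼ (1 − log(2πs))/π² near s = 0. -/
open Real Filter

lemma sinh_div_tendsto : Tendsto (fun x : ℝ => Real.sinh x / x) (nhdsWithin 0 {0}ᶜ) (nhds 1) := by
  have h := Real.hasDerivAt_sinh 0
  rw [hasDerivAt_iff_tendsto_slope] at h
  simpa [slope_fun_def, Real.sinh_zero, Real.cosh_zero, div_eq_inv_mul] using h

lemma sinh_pi_div : Tendsto (fun s : ℝ => Real.sinh (Real.pi * s) / s)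
    (nhdsWithin 0 (Set.Ioi 0)) (nhds Real.pi) := by
  have hmap : Tendsto (fun s : ℝ => Real.pi * s) (nhdsWithin 0 (Set.Ioi 0))
      (nhdsWithin 0 {0}ᶜ) := by
    apply tendsto_nhdsWithin_of_tendsto_nhds_of_eventually_within
    · have hc : Continuous fun s : ℝ => Real.pi * s := continuous_const.mul continuous_id
      have h0 : Tendsto (fun s : ℝ => Real.pi * s) (nhds 0) (nhds 0) := by
        simpa using hc.tendsto 0
      exact h0.mono_left nhdsWithin_le_nhds
    · filter_upwards [self_mem_nhdsWithin] with s hs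
      have : (0:ℝ) < Real.pi * s := mul_pos Real.pi_pos hs
      exact ne_of_gt this
  have h1 : Tendsto (fun s : ℝ => Real.sinh (Real.pi * s) / (Real.pi * s))
      (nhdsWithin 0 (Set.Ioi 0)) (nhds 1) := sinh_div_tendsto.comp hmap
  have h2 := h1.const_mul Real.pi
  rw [mul_one] at h2
  refine h2.congr' ?_
  filter_upwards [self_mem_nhdsWithin] with s hs
  have hs0 : s ≠ 0 := ne_of_gt hs
  field_simp

/-- As `s → 0⁺`, `V(s) + (1/π²)·log s → (1 − log(2π))/π²`, i.e.
`V(s) ∼ (1 − log(2πs))/π²` near `s = 0`. -/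
theorem stmt3 :
    Tendsto (fun s : ℝ => V s + (1 / Real.pi ^ 2) * Real.log s)
      (nhdsWithin 0 (Set.Ioi 0))
      (nhds ((1 - Real.log (2 * Real.pi)) / Real.pi ^ 2)) := by
  have hpi : Real.pi ≠ 0 := Real.pi_ne_zero
  have hcosh : Tendsto (fun s : ℝ => Real.cosh (Real.pi * s))
      (nhdsWithin 0 (Set.Ioi 0)) (nhds 1) := by
    have : Tendsto (fun s : ℝ => Real.cosh (Real.pi * s)) (nhds 0) (nhds 1) := by
      have hc : Continuous fun s : ℝ => Real.cosh (Real.pi * s) :=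
        Real.continuous_cosh.comp (continuous_const.mul continuous_id)
      simpa using hc.tendsto 0
    exact this.mono_left nhdsWithin_le_nhds
  have hterm1 : Tendsto (fun s : ℝ => (1 / Real.pi) *
      (Real.cosh (Real.pi * s) / (Real.sinh (Real.pi * s) / s)))
      (nhdsWithin 0 (Set.Ioi 0)) (nhds (1 / Real.pi ^ 2)) := by
    have := (hcosh.div sinh_pi_div hpi).const_mul (1 / Real.pi)
    convert this using 2
    · simp only [Pi.div_apply]
    · ring
  have hterm2 : Tendsto (fun s : ℝ => (1 / Real.pi ^ 2) *
      Real.log (2 * Real.sinh (Real.pi * s) / s))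
      (nhdsWithin 0 (Set.Ioi 0)) (nhds ((1 / Real.pi ^ 2) * Real.log (2 * Real.pi))) := by
    have hinner : Tendsto (fun s : ℝ => 2 * Real.sinh (Real.pi * s) / s)
        (nhdsWithin 0 (Set.Ioi 0)) (nhds (2 * Real.pi)) := by
      have := sinh_pi_div.const_mul 2
      refine this.congr ?_
      intro s; ring
    have hlog : Tendsto Real.log (nhds (2 * Real.pi)) (nhds (Real.log (2 * Real.pi))) :=
      (Real.continuousAt_log (by positivity)).tendsto
    exact (hlog.comp hinner).const_mul _
  have hsum := hterm1.sub hterm2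
  refine hsum.congr' ?_ |>.mono_right (le_of_eq ?_)
  · filter_upwards [self_mem_nhdsWithin] with s hs
    have hs0 : s ≠ 0 := ne_of_gt hs
    have hsinh : 0 < Real.sinh (Real.pi * s) := Real.sinh_pos_iff.2 (mul_pos Real.pi_pos hs)
    simp only [V]
    rw [Real.log_div (by positivity) hs0]
    field_simp
    ring
  · congr 1
    field_simp
end

section
/- The improper integral of V over (0,∞) converges and equals 1/(6π), i.e. ∫₀^∞ V(t) dt = 1/(6π). -/
open Real MeasureTheory

namespace Stmt5Aux

open Set

/-- The summand. -/
noncomputable def f (n : ℕ) (s : ℝ) : ℝ :=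
  (2*π*s + 1/((n:ℝ)+1)) * Real.exp (-(2*π*((n:ℝ)+1)*s))

lemma key {s : ℝ} (hs : 0 < s) : HasSum (fun n : ℕ => f n s) (π^2 * V s) := by
  have hπ := Real.pi_pos
  set q := Real.exp (-(π*s)) with hq
  have hq0 : 0 < q := Real.exp_pos _
  have hq1 : q < 1 := by
    rw [hq, Real.exp_lt_one_iff]; nlinarith
  have hr0 : 0 < q^2 := by positivity
  have hr1 : q^2 < 1 := by nlinarith
  have h1q : 0 < 1 - q^2 := by linarith
  have hgeo : HasSum (fun n : ℕ => (2*π*s) * (q^2)^(n+1)) (2*π*s * (q^2 * (1-q^2)⁻¹)) := by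
    have h := ((hasSum_geometric_of_lt_one hr0.le hr1).mul_left (q^2)).mul_left (2*π*s)
    have e : (fun n : ℕ => (2*π*s) * (q^2)^(n+1)) = fun n : ℕ => 2*π*s*(q^2*(q^2)^n) := by
      funext n; ring
    rw [e]; exact h
  have hlog : HasSum (fun n : ℕ => (q^2)^(n+1)/((n:ℝ)+1)) (-Real.log (1-q^2)) := by
    have h := hasSum_pow_div_log_of_abs_lt_one (x := q^2) (by rw [abs_of_pos hr0]; exact hr1)
    convert h using 2
  have hadd := hgeo.add hlog
  have hqe : Real.exp (π*s) = q⁻¹ := by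
    rw [hq, ← Real.exp_neg, neg_neg]
  have hterm : (fun n : ℕ => f n s)
      = fun n : ℕ => (2*π*s) * (q^2)^(n+1) + (q^2)^(n+1)/((n:ℝ)+1) := by
    funext n
    have hexp : Real.exp (-(2*π*((n:ℝ)+1)*s)) = (q^2)^(n+1) := by
      rw [← pow_mul, hq, ← Real.exp_nat_mul]
      congr 1
      push_cast; ring
    rw [f, hexp]; ring
  have hV : π^2 * V s = 2*π*s * (q^2 * (1-q^2)⁻¹) + -Real.log (1-q^2) := by
    have hsinh : Real.sinh (π*s) = (1 - q^2)/(2*q) := by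
      rw [Real.sinh_eq, hqe, ← hq]; field_simp
    have hcosh : Real.cosh (π*s) = (1 + q^2)/(2*q) := by
      rw [Real.cosh_eq, hqe, ← hq]; field_simp
    have hlog2 : Real.log (2 * Real.sinh (π*s)) = Real.log (1-q^2) + π*s := by
      rw [hsinh, show 2 * ((1-q^2)/(2*q)) = (1-q^2) * q⁻¹ by field_simp,
        Real.log_mul h1q.ne' (by positivity), Real.log_inv, hq, Real.log_exp]
      ring
    rw [show V s = (1 / π) * s * (Real.cosh (π * s) / Real.sinh (π * s))
        - (1 / π ^ 2) * Real.log (2 * Real.sinh (π * s)) from rfl,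
      hlog2, hsinh, hcosh]
    field_simp
    ring
  rw [hterm, hV]
  exact hadd

lemma f_nonneg (n : ℕ) {s : ℝ} (hs : 0 < s) : 0 ≤ f n s := by
  have hπ := Real.pi_pos
  have h1 : (0:ℝ) < (n:ℝ)+1 := by positivity
  have : 0 ≤ 2*π*s + 1/((n:ℝ)+1) := by positivity
  exact mul_nonneg this (Real.exp_pos _).le

lemma b_pos (n : ℕ) : 0 < 2*π*((n:ℝ)+1) := by
  have hπ := Real.pi_pos; positivity

lemma int_exp {b : ℝ} (hb : 0 < b) : ∫ t in Ioi (0:ℝ), Real.exp (-(b*t)) = 1/b := by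
  have h := Real.integral_rpow_mul_exp_neg_mul_Ioi (a := 1) one_pos hb
  simpa [Real.rpow_one, Real.Gamma_one] using h

lemma int_texp {b : ℝ} (hb : 0 < b) : ∫ t in Ioi (0:ℝ), t * Real.exp (-(b*t)) = 1/b^2 := by
  have h := Real.integral_rpow_mul_exp_neg_mul_Ioi (a := 2) two_pos hb
  rw [setIntegral_congr_fun measurableSet_Ioi
    (fun t (ht : t ∈ Ioi (0:ℝ)) => by
      show t ^ ((2:ℝ)-1) * Real.exp (-(b*t)) = t * Real.exp (-(b*t))
      rw [show (2:ℝ)-1 = 1 by norm_num, Real.rpow_one] :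
      EqOn (fun t : ℝ => t ^ ((2:ℝ)-1) * Real.exp (-(b*t))) (fun t => t * Real.exp (-(b*t))) (Ioi 0))] at h
  rw [h, show Real.Gamma 2 = 1 by
      rw [show (2:ℝ) = 1+1 by norm_num, Real.Gamma_add_one one_ne_zero, Real.Gamma_one]; norm_num,
    mul_one, show ((2:ℝ)) = ((2:ℕ):ℝ) by norm_num, Real.rpow_natCast, div_pow, one_pow]

lemma intOn_exp {b : ℝ} (hb : 0 < b) : IntegrableOn (fun t : ℝ => Real.exp (-(b*t))) (Ioi 0) := by
  simpa [neg_mul] using exp_neg_integrableOn_Ioi 0 hb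

lemma intOn_texp {b : ℝ} (hb : 0 < b) :
    IntegrableOn (fun t : ℝ => t * Real.exp (-(b*t))) (Ioi 0) := by
  have h := integrableOn_rpow_mul_exp_neg_mul_rpow (p := 1) (s := 1) (by norm_num) one_pos hb
  exact h.congr_fun (fun t ht => by simp [Real.rpow_one, neg_mul]) measurableSet_Ioi

lemma f_integrable (n : ℕ) : IntegrableOn (f n) (Ioi 0) := by
  have h : IntegrableOn (fun s : ℝ => (2*π) * (s * Real.exp (-(2*π*((n:ℝ)+1)*s)))
      + (1/((n:ℝ)+1)) * Real.exp (-(2*π*((n:ℝ)+1)*s))) (Ioi 0) :=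
    ((intOn_texp (b_pos n)).const_mul (2*π)).add
      ((intOn_exp (b_pos n)).const_mul (1/((n:ℝ)+1)))
  exact h.congr_fun (fun t ht => by rw [f]; ring) measurableSet_Ioi

lemma f_integral (n : ℕ) : ∫ s in Ioi (0:ℝ), f n s = 1/(π*((n:ℝ)+1)^2) := by
  have hπ := Real.pi_pos
  have hb := b_pos n
  have e : ∀ s ∈ Ioi (0:ℝ), f n s
      = (2*π) * (s * Real.exp (-(2*π*((n:ℝ)+1)*s))) + (1/((n:ℝ)+1)) * Real.exp (-(2*π*((n:ℝ)+1)*s)) := by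
    intro s _; rw [f]; ring
  rw [setIntegral_congr_fun measurableSet_Ioi e, integral_add
      ((intOn_texp hb).const_mul (2*π)) ((intOn_exp hb).const_mul (1/((n:ℝ)+1))),
    integral_const_mul, integral_const_mul, int_texp hb, int_exp hb]
  have h1 : ((n:ℝ)+1) ≠ 0 := by positivity
  field_simp
  ring

lemma sum_values : HasSum (fun n : ℕ => 1/(π*((n:ℝ)+1)^2)) (π/6) := by
  have hπ := Real.pi_pos
  have h := (hasSum_nat_add_iff' (f := fun n : ℕ => 1/(n:ℝ)^2) 1).2 hasSum_zeta_two
  simp only [Finset.range_one, Finset.sum_singleton, Nat.cast_zero] at h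
  norm_num at h
  have h2 := h.div_const π
  have e : (fun n : ℕ => (((n:ℝ)+1)^2)⁻¹/π) = fun n : ℕ => 1/(π*((n:ℝ)+1)^2) := by
    funext n
    have h1 : ((n:ℝ)+1) ≠ 0 := by positivity
    field_simp
  rw [e] at h2
  have : π^2/6/π = π/6 := by field_simp
  rwa [this] at h2

end Stmt5Aux

open Stmt5Aux Set in
/-- The improper integral of `V` over `(0,∞)` converges and equals `1/(6π)`. -/
theorem stmt5 :
    IntegrableOn V (Set.Ioi 0) ∧
    (∫ t in Set.Ioi (0 : ℝ), V t) = 1 / (6 * Real.pi) := by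
  have hπ := Real.pi_pos
  -- summability of integrals of norms
  have hnorm : ∀ n : ℕ, ∫ s in Ioi (0:ℝ), ‖f n s‖ = 1/(π*((n:ℝ)+1)^2) := by
    intro n
    rw [setIntegral_congr_fun measurableSet_Ioi
      (fun s hs => Real.norm_of_nonneg (f_nonneg n hs)), f_integral n]
  have hsummable : Summable (fun n : ℕ => ∫ s in Ioi (0:ℝ), ‖f n s‖) := by
    simp only [hnorm]; exact sum_values.summable
  -- interchange
  have hint := hasSum_integral_of_summable_integral_norm
    (F := f) (μ := volume.restrict (Ioi 0)) (fun n => f_integrable n) hsummable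
  have htsum_eq : ∫ s in Ioi (0:ℝ), ∑' n, f n s = ∫ s in Ioi (0:ℝ), π^2 * V s := by
    refine setIntegral_congr_fun measurableSet_Ioi (fun s hs => ?_)
    exact (key hs).tsum_eq
  rw [htsum_eq] at hint
  simp only [f_integral] at hint
  have hval : ∫ s in Ioi (0:ℝ), π^2 * V s = π/6 := (sum_values.unique hint).symm
  have hVint : (∫ s in Ioi (0:ℝ), V s) = 1/(6*π) := by
    rw [integral_const_mul] at hval
    have hπ2 : (π:ℝ)^2 ≠ 0 := by positivity
    have h3 : (∫ s in Ioi (0:ℝ), V s) = (π/6)/π^2 := by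
      rw [eq_div_iff hπ2]; linear_combination hval
    rw [h3]
    have hπ' : (π:ℝ) ≠ 0 := hπ.ne'
    field_simp
  refine ⟨?_, hVint⟩
  -- integrability
  have hcont : ContinuousOn V (Ioi 0) := by
    have hsinh : ∀ s ∈ Ioi (0:ℝ), Real.sinh (π*s) ≠ 0 := by
      intro s hs
      simp only [mem_Ioi] at hs
      positivity
    apply ContinuousOn.sub
    · exact (continuousOn_const.mul continuousOn_id).mul
        (((Real.continuous_cosh.comp (continuous_const.mul continuous_id)).continuousOn).div
          ((Real.continuous_sinh.comp (continuous_const.mul continuous_id)).continuousOn) hsinh)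
    · refine continuousOn_const.mul (ContinuousOn.log ?_ ?_)
      · exact (continuous_const.mul (Real.continuous_sinh.comp (continuous_const.mul continuous_id))).continuousOn
      · intro s hs
        simp only [mem_Ioi] at hs
        positivity
  refine ⟨hcont.aestronglyMeasurable measurableSet_Ioi, ?_⟩
  -- finite integral
  have hVnn : ∀ s ∈ Ioi (0:ℝ), 0 ≤ V s := by
    intro s hs
    have h := (key hs).nonneg (fun n => f_nonneg n hs)
    have h2 : (0:ℝ) < π^2 := by positivity
    nlinarith [h, h2]
  rw [hasFiniteIntegral_iff_norm]
  have hcongr : ∫⁻ s in Ioi (0:ℝ), ENNReal.ofReal ‖V s‖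
      = ∫⁻ s in Ioi (0:ℝ), (ENNReal.ofReal (π^2)⁻¹) * ∑' n, ENNReal.ofReal (f n s) := by
    refine setLIntegral_congr_fun measurableSet_Ioi (fun s hs => ?_)
    rw [Real.norm_of_nonneg (hVnn s hs),
      show V s = (π^2)⁻¹ * (π^2 * V s) by field_simp,
      ← (key hs).tsum_eq,
      ENNReal.ofReal_mul (by positivity),
      ENNReal.ofReal_tsum_of_nonneg (fun n => f_nonneg n hs) (key hs).summable]
  rw [hcongr, lintegral_const_mul' _ _ ENNReal.ofReal_ne_top, lintegral_tsum]
  · have hlint : ∀ n : ℕ, ∫⁻ s in Ioi (0:ℝ), ENNReal.ofReal (f n s)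
        = ENNReal.ofReal (1/(π*((n:ℝ)+1)^2)) := by
      intro n
      rw [← ofReal_integral_eq_lintegral_ofReal (f_integrable n)
        ((ae_restrict_iff' measurableSet_Ioi).2 (Filter.Eventually.of_forall fun s hs => f_nonneg n hs)),
        f_integral n]
    simp only [hlint]
    rw [← ENNReal.ofReal_tsum_of_nonneg (fun n => by positivity) sum_values.summable]
    exact ENNReal.mul_lt_top ENNReal.ofReal_lt_top ENNReal.ofReal_lt_top
  · intro n
    have hc : Continuous (f n) := by
      have : Continuous (fun s : ℝ => -(2*π*((n:ℝ)+1)*s)) := (continuous_const.mul continuous_id).neg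
      exact ((continuous_const.mul continuous_id).add continuous_const).mul
        (Real.continuous_exp.comp this)
    exact (hc.measurable.ennreal_ofReal).aemeasurable
end

section
/- The improper integral ∫₀^∞ s·φ(s) ds = ∫₀^∞ s²/sinh²(πs) ds converges and equals 1/(6π); in particular ∫₀^∞ s·φ(s) ds = ∫₀^∞ V(s) ds. -/
open Real MeasureTheory

/-- The wall-interaction force `φ(s) = s / sinh²(πs)`. -/
noncomputable def phi (s : ℝ) : ℝ := s / (Real.sinh (Real.pi * s)) ^ 2

lemma integrableOn_pow_mul_exp (k : ℕ) {b : ℝ} (hb : 0 < b) :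
    IntegrableOn (fun s : ℝ => s ^ k * Real.exp (-(b * s))) (Set.Ioi 0) := by
  have h := integrableOn_rpow_mul_exp_neg_mul_rpow (s := (k:ℝ)) (p := 1)
    (lt_of_lt_of_le (by norm_num) (Nat.cast_nonneg k)) (by norm_num) hb
  refine h.congr_fun (fun x hx => ?_) measurableSet_Ioi
  dsimp only
  rw [Real.rpow_one, Real.rpow_natCast, neg_mul]

lemma integral_pow_mul_exp (k : ℕ) {b : ℝ} (hb : 0 < b) :
    ∫ s in Set.Ioi (0:ℝ), s ^ k * Real.exp (-(b * s))
      = (Nat.factorial k : ℝ) / b ^ (k+1) := by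
  have h := Real.integral_rpow_mul_exp_neg_mul_Ioi (a := (k:ℝ)+1) (by positivity) hb
  simp_rw [show ((k:ℝ)+1-1) = ((k:ℕ):ℝ) by ring, Real.rpow_natCast] at h
  rw [h, show ((k:ℝ)+1) = ((k+1:ℕ):ℝ) by push_cast; ring, Real.rpow_natCast,
    show ((k+1:ℕ):ℝ) = (k:ℝ)+1 by push_cast; ring, Real.Gamma_nat_eq_factorial,
    div_pow, one_pow, div_mul_eq_mul_div, one_mul]

/-- the summed values -/
noncomputable def cseq (n : ℕ) : ℝ := 1 / (Real.pi ^ 3 * ((n:ℝ)+1) ^ 2)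

lemma hasSum_cseq : HasSum cseq (1 / (6 * Real.pi)) := by
  have h := (hasSum_nat_add_iff' (f := fun n : ℕ => (1:ℝ) / (n:ℝ) ^ 2) 1).mpr hasSum_zeta_two
  simp only [Finset.range_one, Finset.sum_singleton, Nat.cast_zero] at h
  norm_num at h
  have h2 := h.mul_left (1 / Real.pi ^ 3)
  have hpi := Real.pi_pos
  have : (1 / Real.pi ^ 3) * (Real.pi ^ 2 / 6) = 1 / (6 * Real.pi) := by
    field_simp
  rw [this] at h2
  refine h2.congr_fun fun n => ?_
  rw [cseq]
  push_cast
  field_simp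

section terms

variable (n : ℕ)

/-- terms for `s * phi s` -/
noncomputable def F (n : ℕ) (s : ℝ) : ℝ :=
  (4*((n:ℝ)+1)*s^2) * Real.exp (-(2*Real.pi*((n:ℝ)+1)*s))

/-- terms for `V s` -/
noncomputable def G (n : ℕ) (s : ℝ) : ℝ :=
  (2*s/Real.pi) * Real.exp (-(2*Real.pi*((n:ℝ)+1)*s))
    + (1/Real.pi^2) * (Real.exp (-(2*Real.pi*((n:ℝ)+1)*s)) / ((n:ℝ)+1))

lemma hb : (0:ℝ) < 2*Real.pi*((n:ℝ)+1) := by positivity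

lemma F_integrableOn : IntegrableOn (F n) (Set.Ioi 0) := by
  have h := ((integrableOn_pow_mul_exp 2 (hb n)).const_mul (4*((n:ℝ)+1)))
  refine IntegrableOn.congr_fun h (fun x _ => ?_) measurableSet_Ioi
  simp only [F]; ring

lemma F_integral : ∫ s in Set.Ioi (0:ℝ), F n s = cseq n := by
  simp_rw [F, show ∀ s : ℝ, (4*((n:ℝ)+1)*s^2) * Real.exp (-(2*Real.pi*((n:ℝ)+1)*s))
    = (4*((n:ℝ)+1)) * (s^2 * Real.exp (-(2*Real.pi*((n:ℝ)+1)*s))) from fun s => by ring]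
  rw [MeasureTheory.integral_const_mul, integral_pow_mul_exp 2 (hb n), cseq]
  have hpi := Real.pi_pos
  have hn : (0:ℝ) < (n:ℝ)+1 := by positivity
  norm_num [Nat.factorial]
  field_simp
  ring

lemma G_integrableOn : IntegrableOn (G n) (Set.Ioi 0) := by
  have h1 := ((integrableOn_pow_mul_exp 1 (hb n)).const_mul (2/Real.pi))
  have h2 := ((integrableOn_pow_mul_exp 0 (hb n)).const_mul (1/(Real.pi^2*((n:ℝ)+1))))
  have hpi := Real.pi_pos
  have hn : (0:ℝ) < (n:ℝ)+1 := by positivity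
  refine IntegrableOn.congr_fun (h1.add h2) (fun x _ => ?_) measurableSet_Ioi
  simp only [G, Pi.add_apply]
  field_simp

lemma G_integral : ∫ s in Set.Ioi (0:ℝ), G n s = cseq n := by
  have hpi := Real.pi_pos
  have hn : (0:ℝ) < (n:ℝ)+1 := by positivity
  simp_rw [G, show ∀ s : ℝ, (2*s/Real.pi) * Real.exp (-(2*Real.pi*((n:ℝ)+1)*s))
      + (1/Real.pi^2) * (Real.exp (-(2*Real.pi*((n:ℝ)+1)*s)) / ((n:ℝ)+1))
    = (2/Real.pi) * (s^1 * Real.exp (-(2*Real.pi*((n:ℝ)+1)*s)))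
      + (1/(Real.pi^2*((n:ℝ)+1))) * (s^0 * Real.exp (-(2*Real.pi*((n:ℝ)+1)*s)))
    from fun s => by field_simp]
  rw [MeasureTheory.integral_add
    ((integrableOn_pow_mul_exp 1 (hb n)).const_mul _)
    ((integrableOn_pow_mul_exp 0 (hb n)).const_mul _),
    MeasureTheory.integral_const_mul, MeasureTheory.integral_const_mul,
    integral_pow_mul_exp 1 (hb n), integral_pow_mul_exp 0 (hb n), cseq]
  norm_num [Nat.factorial]
  field_simp
  ring

end terms

lemma hasSum_phi {s : ℝ} (hs : 0 < s) :
    HasSum (fun n : ℕ => F n s) (s * phi s) := by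
  simp only [F]
  set r := Real.exp (-(2*Real.pi*s)) with hrdef
  set A := Real.exp (-(Real.pi*s)) with hAdef
  have hr0 : 0 < r := Real.exp_pos _
  have hr1 : r < 1 := Real.exp_lt_one_iff.mpr (by nlinarith [Real.pi_pos])
  have hsh : 0 < Real.sinh (Real.pi * s) := Real.sinh_pos_iff.mpr (by positivity)
  have e1 : A * Real.exp (Real.pi*s) = 1 := by
    rw [hAdef, ← Real.exp_add]; simp
  have e2 : A * A = r := by
    rw [hAdef, hrdef, ← Real.exp_add]; ring_nf
  have hden : 1 - r = 2 * A * Real.sinh (Real.pi*s) := by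
    rw [Real.sinh_eq]
    linear_combination e2 - e1
  have h := hasSum_coe_mul_geometric_of_norm_lt_one (r := r)
    (by rwa [Real.norm_eq_abs, abs_of_pos hr0])
  have h2 := (hasSum_nat_add_iff' (f := fun n : ℕ => (n:ℝ) * r ^ n) 1).mpr h
  simp only [Finset.range_one, Finset.sum_singleton, Nat.cast_zero, zero_mul, pow_zero,
    sub_zero, Nat.cast_add, Nat.cast_one] at h2
  have h3 := h2.mul_left (4*s^2)
  have hfun : ∀ n : ℕ, (4*s^2) * (((n:ℝ)+1) * r ^ (n+1))
      = (4*((n:ℝ)+1)*s^2) * Real.exp (-(2*Real.pi*((n:ℝ)+1)*s)) := by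
    intro n
    have : Real.exp (-(2*Real.pi*((n:ℝ)+1)*s)) = r ^ (n+1) := by
      rw [hrdef, ← Real.exp_nat_mul]
      congr 1
      push_cast; ring
    rw [this]; ring
  rw [show (fun n : ℕ => (4*s^2) * (((n:ℝ)+1) * r ^ (n+1)))
      = (fun n : ℕ => (4*((n:ℝ)+1)*s^2) * Real.exp (-(2*Real.pi*((n:ℝ)+1)*s)))
      from funext hfun] at h3
  suffices hh : s * phi s = 4 * s ^ 2 * (r / (1 - r) ^ 2) by rw [hh]; exact h3
  rw [phi, hden, show (2 * A * Real.sinh (Real.pi*s))^2 = 4*r*(Real.sinh (Real.pi*s))^2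
    by rw [← e2]; ring]
  field_simp

lemma hasSum_V {s : ℝ} (hs : 0 < s) :
    HasSum (fun n : ℕ => G n s) (V s) := by
  simp only [G]
  set r := Real.exp (-(2*Real.pi*s)) with hrdef
  set A := Real.exp (-(Real.pi*s)) with hAdef
  have hpi := Real.pi_pos
  have hr0 : 0 < r := Real.exp_pos _
  have hr1 : r < 1 := Real.exp_lt_one_iff.mpr (by nlinarith)
  have hsh : 0 < Real.sinh (Real.pi * s) := Real.sinh_pos_iff.mpr (by positivity)
  have hA0 : 0 < A := Real.exp_pos _
  have e1 : A * Real.exp (Real.pi*s) = 1 := by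
    rw [hAdef, ← Real.exp_add]; simp
  have e2 : A * A = r := by
    rw [hAdef, hrdef, ← Real.exp_add]; ring_nf
  have hden : 1 - r = 2 * A * Real.sinh (Real.pi*s) := by
    rw [Real.sinh_eq]
    linear_combination e2 - e1
  have hrpow : ∀ n : ℕ, Real.exp (-(2*Real.pi*((n:ℝ)+1)*s)) = r ^ (n+1) := by
    intro n
    rw [hrdef, ← Real.exp_nat_mul]
    congr 1
    push_cast; ring
  have h1 : HasSum (fun n : ℕ => r ^ (n+1)) (r * (1-r)⁻¹) := by
    have := (hasSum_geometric_of_lt_one hr0.le hr1).mul_left r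
    refine this.congr_fun fun n => ?_
    rw [pow_succ']
  have h2 := Real.hasSum_pow_div_log_of_abs_lt_one (x := r) (by rw [abs_of_pos hr0]; exact hr1)
  have h3 := (h1.mul_left (2*s/Real.pi)).add (h2.mul_left (1/Real.pi^2))
  have hfun : (fun n : ℕ => (2*s/Real.pi) * r^(n+1) + (1/Real.pi^2) * (r^(n+1) / ((n:ℝ)+1)))
      = (fun n : ℕ => (2*s/Real.pi) * Real.exp (-(2*Real.pi*((n:ℝ)+1)*s))
        + (1/Real.pi^2) * (Real.exp (-(2*Real.pi*((n:ℝ)+1)*s)) / ((n:ℝ)+1))) := by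
    funext n; rw [hrpow n]
  have h3' : HasSum (fun n : ℕ => (2*s/Real.pi) * Real.exp (-(2*Real.pi*((n:ℝ)+1)*s))
        + (1/Real.pi^2) * (Real.exp (-(2*Real.pi*((n:ℝ)+1)*s)) / ((n:ℝ)+1)))
      ((2*s/Real.pi) * (r * (1-r)⁻¹) + (1/Real.pi^2) * (-Real.log (1-r))) := by
    rw [← hfun]
    refine h3.congr_fun fun n => ?_
    push_cast
    ring
  convert h3' using 1
  have hlog : Real.log (2 * Real.sinh (Real.pi*s)) = Real.pi*s + Real.log (1-r) := by
    have : 2 * Real.sinh (Real.pi*s) = Real.exp (Real.pi*s) * (1-r) := by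
      rw [hden]
      have hEA : Real.exp (Real.pi*s) = A⁻¹ := by
        field_simp
        linarith [e1]
      rw [hEA]
      field_simp
    rw [this, Real.log_mul (Real.exp_ne_zero _) (by nlinarith), Real.log_exp]
  rw [V, hlog, Real.cosh_eq, Real.sinh_eq, Real.exp_neg]
  have hE1 : Real.exp (Real.pi*s) - (Real.exp (Real.pi*s))⁻¹ ≠ 0 := by
    have := Real.sinh_eq (Real.pi*s)
    rw [Real.exp_neg] at this
    nlinarith [hsh]
  have hr1' : (1:ℝ) - r ≠ 0 := by nlinarith
  have hrE : r = ((Real.exp (Real.pi*s))^2)⁻¹ := by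
    rw [hrdef, ← Real.exp_nat_mul, ← Real.exp_neg]
    congr 1; push_cast; ring
  rw [hrE] at hr1' ⊢
  have hEgt : 1 < Real.exp (Real.pi*s) := by
    rw [← Real.exp_zero]
    exact Real.exp_lt_exp.mpr (by positivity)
  generalize hEdef : Real.exp (Real.pi*s) = E at *
  have hE2 : 1 < E^2 := by nlinarith
  have hD : E^2 * Real.pi - Real.pi ≠ 0 :=
    ne_of_gt (by nlinarith [mul_lt_mul_of_pos_right hE2 hpi])
  field_simp [hD]
  have hX : (E^2*Real.pi - Real.pi) * (E^2*Real.pi - Real.pi)⁻¹ = 1 := mul_inv_cancel₀ hD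
  have hE' : E^2 - 1 ≠ 0 := ne_of_gt (by nlinarith)
  have hQ : Real.pi*s*(E^2+1)/(E^2-1) = Real.pi*s*2/(E^2-1) + Real.pi*s := by
    rw [div_add' _ _ _ hE']; congr 1; ring
  rw [hQ]; ring

lemma F_meas (n : ℕ) : Measurable (F n) := by
  unfold F; fun_prop

lemma F_nonneg (n : ℕ) {s : ℝ} (hs : 0 < s) : 0 ≤ F n s := by
  simp only [F]
  positivity

lemma G_nonneg (n : ℕ) {s : ℝ} (hs : 0 < s) : 0 ≤ G n s := by
  have hpi := Real.pi_pos
  have hn : (0:ℝ) < (n:ℝ)+1 := by positivity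
  simp only [G]
  positivity

lemma cseq_nonneg (n : ℕ) : 0 ≤ cseq n := by
  have hpi := Real.pi_pos
  rw [cseq]; positivity

/-- The improper integral `∫₀^∞ s·φ(s) ds = ∫₀^∞ s²/sinh²(πs) ds` converges and equals
`1/(6π)`; in particular it equals `∫₀^∞ V(s) ds`. -/
theorem stmt6 :
    IntegrableOn (fun s : ℝ => s * phi s) (Set.Ioi 0) ∧
    (∫ s in Set.Ioi (0 : ℝ), s * phi s) = 1 / (6 * Real.pi) ∧
    (∫ s in Set.Ioi (0 : ℝ), s * phi s) = ∫ s in Set.Ioi (0 : ℝ), V s := by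
  have hpi := Real.pi_pos
  -- norm integrals
  have hFnorm : ∀ n : ℕ, (∫ s in Set.Ioi (0:ℝ), ‖F n s‖) = cseq n := by
    intro n
    rw [← F_integral n]
    refine setIntegral_congr_fun measurableSet_Ioi fun s hs => ?_
    exact Real.norm_of_nonneg (F_nonneg n hs)
  have hGnorm : ∀ n : ℕ, (∫ s in Set.Ioi (0:ℝ), ‖G n s‖) = cseq n := by
    intro n
    rw [← G_integral n]
    refine setIntegral_congr_fun measurableSet_Ioi fun s hs => ?_
    exact Real.norm_of_nonneg (G_nonneg n hs)
  have hFsum : Summable (fun n : ℕ => ∫ s in Set.Ioi (0:ℝ), ‖F n s‖) := by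
    rw [show (fun n : ℕ => ∫ s in Set.Ioi (0:ℝ), ‖F n s‖) = cseq from funext hFnorm]
    exact hasSum_cseq.summable
  have hGsum : Summable (fun n : ℕ => ∫ s in Set.Ioi (0:ℝ), ‖G n s‖) := by
    rw [show (fun n : ℕ => ∫ s in Set.Ioi (0:ℝ), ‖G n s‖) = cseq from funext hGnorm]
    exact hasSum_cseq.summable
  have key1 := MeasureTheory.integral_tsum_of_summable_integral_norm
    (μ := volume.restrict (Set.Ioi 0)) (fun n => F_integrableOn n) hFsum
  have key2 := MeasureTheory.integral_tsum_of_summable_integral_norm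
    (μ := volume.restrict (Set.Ioi 0)) (fun n => G_integrableOn n) hGsum
  have hval1 : (∫ s in Set.Ioi (0:ℝ), s * phi s) = 1 / (6 * Real.pi) := by
    calc (∫ s in Set.Ioi (0:ℝ), s * phi s)
        = ∫ s in Set.Ioi (0:ℝ), ∑' n : ℕ, F n s :=
          setIntegral_congr_fun measurableSet_Ioi fun s hs => ((hasSum_phi hs).tsum_eq).symm
      _ = ∑' n : ℕ, ∫ s in Set.Ioi (0:ℝ), F n s := key1.symm
      _ = ∑' n : ℕ, cseq n := by simp_rw [F_integral]
      _ = 1 / (6 * Real.pi) := hasSum_cseq.tsum_eq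
  have hval2 : (∫ s in Set.Ioi (0:ℝ), V s) = 1 / (6 * Real.pi) := by
    calc (∫ s in Set.Ioi (0:ℝ), V s)
        = ∫ s in Set.Ioi (0:ℝ), ∑' n : ℕ, G n s :=
          setIntegral_congr_fun measurableSet_Ioi fun s hs => ((hasSum_V hs).tsum_eq).symm
      _ = ∑' n : ℕ, ∫ s in Set.Ioi (0:ℝ), G n s := key2.symm
      _ = ∑' n : ℕ, cseq n := by simp_rw [G_integral]
      _ = 1 / (6 * Real.pi) := hasSum_cseq.tsum_eq
  -- integrability
  have hmeas : AEStronglyMeasurable (fun s : ℝ => s * phi s)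
      (volume.restrict (Set.Ioi 0)) := by
    apply Measurable.aestronglyMeasurable
    unfold phi
    fun_prop
  have hnn : 0 ≤ᵐ[volume.restrict (Set.Ioi 0)] fun s : ℝ => s * phi s := by
    filter_upwards [ae_restrict_mem measurableSet_Ioi] with s hs
    have hs' : (0:ℝ) < s := hs
    simp only [Pi.zero_apply, phi]
    positivity
  have hint : IntegrableOn (fun s : ℝ => s * phi s) (Set.Ioi 0) := by
    refine (lintegral_ofReal_ne_top_iff_integrable hmeas hnn).mp ?_
    have step1 : (∫⁻ s in Set.Ioi (0:ℝ), ENNReal.ofReal (s * phi s))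
        = ∫⁻ s in Set.Ioi (0:ℝ), ∑' n : ℕ, ENNReal.ofReal (F n s) := by
      refine setLIntegral_congr_fun measurableSet_Ioi (fun s hs => ?_)
      rw [← (hasSum_phi hs).tsum_eq,
        ENNReal.ofReal_tsum_of_nonneg (fun n => F_nonneg n hs) (hasSum_phi hs).summable]
    rw [step1, lintegral_tsum (fun n => ((F_meas n).ennreal_ofReal).aemeasurable)]
    have step2 : ∀ n : ℕ, (∫⁻ s in Set.Ioi (0:ℝ), ENNReal.ofReal (F n s))
        = ENNReal.ofReal (cseq n) := by
      intro n
      rw [← F_integral n]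
      refine (ofReal_integral_eq_lintegral_ofReal (F_integrableOn n) ?_).symm
      filter_upwards [ae_restrict_mem measurableSet_Ioi] with s hs
      exact F_nonneg n hs
    simp_rw [step2]
    rw [← ENNReal.ofReal_tsum_of_nonneg cseq_nonneg hasSum_cseq.summable]
    exact ENNReal.ofReal_ne_top
  exact ⟨hint, hval1, hval1.trans hval2.symm⟩
end

section
/- For every t > 0 the series V_eff(t) = Σ_{k=1}^∞ V(kt) converges, the function V_eff is differentiable on (0,∞), and its derivative is V_eff'(t) = Σ_{k=1}^∞ k·V'(kt) = −Σ_{k=1}^∞ k·φ(kt) = −φ_eff(t). -/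
open Real

lemma hasDerivAt_V {s : ℝ} (hs : 0 < s) : HasDerivAt V (-(phi s)) s := by
  have hπ : (0:ℝ) < π := Real.pi_pos
  have hsh : 0 < Real.sinh (π * s) := Real.sinh_pos_iff.2 (by positivity)
  have hlin : HasDerivAt (fun x : ℝ => π * x) π s := by
    simpa using (hasDerivAt_id s).const_mul π
  have hsinh : HasDerivAt (fun x => Real.sinh (π * x)) (Real.cosh (π * s) * π) s := by
    exact (Real.hasDerivAt_sinh (π * s)).comp s hlin
  have hcosh : HasDerivAt (fun x => Real.cosh (π * x)) (Real.sinh (π * s) * π) s := by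
    exact (Real.hasDerivAt_cosh (π * s)).comp s hlin
  have hq := hcosh.div hsinh hsh.ne'
  have hid : HasDerivAt (fun x : ℝ => (1/π) * x) (1/π) s := by
    simpa using (hasDerivAt_id s).const_mul (1/π)
  have h1 := hid.mul hq
  have harg : HasDerivAt (fun x => 2 * Real.sinh (π * x)) (2 * (Real.cosh (π * s) * π)) s :=
    hsinh.const_mul 2
  have hlog := harg.log (by positivity)
  have h2 := hlog.const_mul ((1:ℝ)/π^2)
  have h3 := h1.sub h2
  convert h3 using 1
  · rfl
  · rfl
  · rfl
  have hc := Real.cosh_sq (π * s)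
  rw [phi, Pi.div_apply]
  field_simp
  rw [mul_comm s π]
  linear_combination (π * s) * hc

lemma phi_nonneg {s : ℝ} (hs : 0 < s) : 0 ≤ phi s := by
  have hsh : 0 < Real.sinh (π * s) := Real.sinh_pos_iff.2 (by positivity)
  rw [phi]; positivity

lemma phi_bound {m s : ℝ} (hm : 0 < m) (hms : m ≤ s) :
    phi s ≤ 2 / (π * (1 - Real.exp (-(π * m)))) * Real.exp (-(π * s)) := by
  have hπ : (0:ℝ) < π := Real.pi_pos
  have hs : 0 < s := lt_of_lt_of_le hm hms
  have hsh : 0 < Real.sinh (π * s) := Real.sinh_pos_iff.2 (by positivity)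
  set Em : ℝ := Real.exp (-(π * m)) with hEmdef
  have hEm : Em < 1 := Real.exp_lt_one_iff.2 (by nlinarith)
  have hEm0 : 0 < Real.exp (-(π * m)) := Real.exp_pos _
  have h1 : π * s ≤ Real.sinh (π * s) := (Real.self_lt_sinh_iff.2 (by positivity)).le
  have h2 : (Real.exp (π * s) - 1) / 2 ≤ Real.sinh (π * s) := by
    rw [Real.sinh_eq]
    have : Real.exp (-(π * s)) ≤ 1 := Real.exp_le_one_iff.2 (by nlinarith)
    linarith
  have e1 : Real.exp (π * s) * (1 - Real.exp (-(π * m))) ≤ Real.exp (π * s) - 1 := by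
    have heq : Real.exp (π * s) * Real.exp (-(π * m)) = Real.exp (π * s - π * m) := by
      rw [← Real.exp_add]; ring_nf
    have h3 : 1 ≤ Real.exp (π * s - π * m) := Real.one_le_exp (by nlinarith)
    nlinarith
  have hden : 0 < π * (1 - Real.exp (-(π * m))) := mul_pos hπ (by linarith)
  have hps : 0 ≤ π * s := by positivity
  have hnn : 0 ≤ (Real.exp (π * s) - 1) / 2 := by
    nlinarith [Real.one_le_exp hps]
  have hA := mul_le_mul h1 h2 hnn hsh.le
  have hB := mul_le_mul_of_nonneg_left e1 hps
  have key : s * (π * (1 - Real.exp (-(π * m)))) * Real.exp (π * s) ≤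
      2 * Real.sinh (π * s) ^ 2 := by nlinarith [hA, hB]
  have hsh2 : (0:ℝ) < Real.sinh (π * s) ^ 2 := by positivity
  rw [phi, div_le_iff₀ hsh2, Real.exp_neg]
  rw [show 2 / (π * (1 - Em)) * (Real.exp (π * s))⁻¹ * Real.sinh (π * s) ^ 2
      = (2 * Real.sinh (π * s) ^ 2) / ((π * (1 - Em)) * Real.exp (π * s)) by
    field_simp
    try ring]
  rw [le_div_iff₀ (by positivity)]
  nlinarith [key]

lemma V_repr {s : ℝ} (hs : 0 < s) :
    V s = (2 * s / π) * (Real.exp (-(2 * π * s)) / (1 - Real.exp (-(2 * π * s))))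
      - (1 / π ^ 2) * Real.log (1 - Real.exp (-(2 * π * s))) := by
  have hπ : (0:ℝ) < π := Real.pi_pos
  set E := Real.exp (-(2 * π * s)) with hEdef
  have hE1 : E < 1 := Real.exp_lt_one_iff.2 (by nlinarith)
  have hE0 : 0 < E := Real.exp_pos _
  have hexpE : Real.exp (π * s) * E = Real.exp (-(π * s)) := by
    rw [hEdef, ← Real.exp_add]; ring_nf
  have h2sinh : 2 * Real.sinh (π * s) = Real.exp (π * s) * (1 - E) := by
    rw [Real.sinh_eq]; nlinarith [hexpE]
  have hcoshid : Real.cosh (π * s) = Real.exp (π * s) * (1 + E) / 2 := by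
    rw [Real.cosh_eq]; nlinarith [hexpE]
  have hshid : Real.sinh (π * s) = Real.exp (π * s) * (1 - E) / 2 := by linarith
  have hquot : Real.cosh (π * s) / Real.sinh (π * s) = (1 + E) / (1 - E) := by
    rw [hcoshid, hshid]
    have h1E : ((1:ℝ) - E) ≠ 0 := ne_of_gt (by linarith)
    field_simp
  have hlogid : Real.log (2 * Real.sinh (π * s)) = π * s + Real.log (1 - E) := by
    rw [h2sinh, Real.log_mul (Real.exp_ne_zero _) (by linarith), Real.log_exp]
  rw [V, hquot, hlogid]
  have h1E : ((1:ℝ) - E) ≠ 0 := ne_of_gt (by linarith)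
  field_simp
  ring

lemma V_nonneg {s : ℝ} (hs : 0 < s) : 0 ≤ V s := by
  have hπ : (0:ℝ) < π := Real.pi_pos
  rw [V_repr hs]
  set E := Real.exp (-(2 * π * s)) with hEdef
  have hE1 : E < 1 := Real.exp_lt_one_iff.2 (by nlinarith)
  have hE0 : 0 < E := Real.exp_pos _
  have hlog : Real.log (1 - E) ≤ 0 := Real.log_nonpos (by linarith) (by linarith)
  have h1 : 0 ≤ (2 * s / π) * (E / (1 - E)) :=
    mul_nonneg (by positivity) (div_nonneg hE0.le (by linarith))
  nlinarith [mul_nonneg (by positivity : (0:ℝ) ≤ 1/π^2) (neg_nonneg.2 hlog)]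

lemma V_bound {s : ℝ} (hs : 0 < s) :
    V s ≤ (2 * s / π + 1 / π ^ 2) * (Real.exp (-(2 * π * s)) / (1 - Real.exp (-(2 * π * s)))) := by
  have hπ : (0:ℝ) < π := Real.pi_pos
  rw [V_repr hs]
  set E := Real.exp (-(2 * π * s)) with hEdef
  have hE1 : E < 1 := Real.exp_lt_one_iff.2 (by nlinarith)
  have hE0 : 0 < E := Real.exp_pos _
  have hlogb : -Real.log (1 - E) ≤ E / (1 - E) := by
    have h4 : E / (1 - E) + 1 ≤ Real.exp (E / (1 - E)) := Real.add_one_le_exp _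
    have h5 : (1 - E)⁻¹ ≤ Real.exp (E / (1 - E)) := by
      have h1E : ((1:ℝ) - E) ≠ 0 := ne_of_gt (by linarith)
      have : (1 - E)⁻¹ = E / (1 - E) + 1 := by field_simp; ring
      linarith
    have h6 : Real.log ((1 - E)⁻¹) ≤ E / (1 - E) :=
      (Real.log_le_iff_le_exp (inv_pos.2 (by linarith))).2 h5
    rwa [Real.log_inv] at h6
  have h7 : -(1 / π ^ 2 * Real.log (1 - E)) ≤ (1 / π ^ 2) * (E / (1 - E)) := by
    rw [← mul_neg]
    exact mul_le_mul_of_nonneg_left hlogb (by positivity)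
  have h8 : 0 ≤ E / (1 - E) := div_nonneg hE0.le (by linarith)
  nlinarith

lemma summable_aux {r : ℝ} (hr0 : 0 ≤ r) (hr1 : r < 1) (C : ℝ) :
    Summable (fun k : ℕ => C * (((k : ℝ) + 1) * r ^ (k + 1))) := by
  apply Summable.mul_left
  have h1 : Summable (fun n : ℕ => (n : ℝ) ^ 1 * r ^ n) :=
    summable_pow_mul_geometric_of_norm_lt_one 1 (by rwa [Real.norm_eq_abs, abs_of_nonneg hr0])
  have h2 : Summable (fun n : ℕ => r ^ n) := summable_geometric_of_lt_one hr0 hr1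
  have h3 : Summable (fun n : ℕ => r * ((n : ℝ) * r ^ n + r ^ n)) :=
    (((by simpa using h1 : Summable (fun n : ℕ => (n : ℝ) * r ^ n)).add h2).mul_left r)
  exact h3.congr (fun n => by ring)

set_option maxHeartbeats 1000000 in
/-- For every `t > 0` the series `V_eff(t) = Σ_{k=1}^∞ V(kt)` converges, the series
`φ_eff(t) = Σ_{k=1}^∞ k·φ(kt)` converges, and `V_eff` is differentiable at `t` with
derivative `V_eff'(t) = Σ_{k=1}^∞ k·V'(kt) = −φ_eff(t)`. -/
theorem stmt11 : ∀ t : ℝ, 0 < t →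
    Summable (fun k : ℕ => V (((k : ℝ) + 1) * t)) ∧
    Summable (fun k : ℕ => ((k : ℝ) + 1) * phi (((k : ℝ) + 1) * t)) ∧
    HasDerivAt (fun u : ℝ => ∑' k : ℕ, V (((k : ℝ) + 1) * u))
      (-(∑' k : ℕ, ((k : ℝ) + 1) * phi (((k : ℝ) + 1) * t))) t := by
  intro t ht
  have hπ : (0:ℝ) < π := Real.pi_pos
  -- geometric ratios
  set r : ℝ := Real.exp (-(2 * π * t)) with hrdef
  have hr0 : 0 < r := Real.exp_pos _
  have hr1 : r < 1 := Real.exp_lt_one_iff.2 (by nlinarith)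
  set ρ : ℝ := Real.exp (-(π * (t / 2))) with hρdef
  have hρ0 : 0 < ρ := Real.exp_pos _
  have hρ1 : ρ < 1 := Real.exp_lt_one_iff.2 (by nlinarith)
  -- positivity of arguments
  have hkpos : ∀ (k : ℕ) (x : ℝ), 0 < x → 0 < ((k : ℝ) + 1) * x := by
    intro k x hx; positivity
  -- Summability of V series
  have hVsum : Summable (fun k : ℕ => V (((k : ℝ) + 1) * t)) := by
    apply Summable.of_nonneg_of_le (fun k => V_nonneg (hkpos k t ht))
      (f := fun k : ℕ => ((2 * t / π + 1 / π ^ 2) / (1 - r)) * (((k : ℝ) + 1) * r ^ (k + 1)))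
    · intro k
      have hs : (0:ℝ) < ((k : ℝ) + 1) * t := hkpos k t ht
      have hEeq : Real.exp (-(2 * π * (((k : ℝ) + 1) * t))) = r ^ (k + 1) := by
        rw [hrdef, ← Real.exp_nat_mul]
        congr 1
        push_cast
        ring
      have hE1 : r ^ (k + 1) ≤ r := by
        calc r ^ (k + 1) ≤ r ^ 1 := pow_le_pow_of_le_one hr0.le hr1.le (by omega)
        _ = r := pow_one r
      have hb := V_bound hs
      rw [hEeq] at hb
      have hk1 : (1:ℝ) ≤ (k : ℝ) + 1 := by linarith [Nat.cast_nonneg (α := ℝ) k]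
      have hfrac : r ^ (k + 1) / (1 - r ^ (k + 1)) ≤ r ^ (k + 1) / (1 - r) := by
        apply div_le_div_of_nonneg_left (by positivity) (by linarith) (by linarith)
      have hcoef : 2 * (((k : ℝ) + 1) * t) / π + 1 / π ^ 2 ≤
          (2 * t / π + 1 / π ^ 2) * ((k : ℝ) + 1) := by
        have h1p : 0 ≤ 1 / π ^ 2 := by positivity
        have hkc : (0:ℝ) ≤ (k : ℝ) := Nat.cast_nonneg k
        calc 2 * (((k : ℝ) + 1) * t) / π + 1 / π ^ 2
            ≤ 2 * (((k : ℝ) + 1) * t) / π + 1 / π ^ 2 + 1 / π ^ 2 * (k : ℝ) := by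
              linarith [mul_nonneg h1p hkc]
          _ = (2 * t / π + 1 / π ^ 2) * ((k : ℝ) + 1) := by ring
      have hcoef0 : (0:ℝ) ≤ 2 * (((k : ℝ) + 1) * t) / π + 1 / π ^ 2 := by positivity
      calc V (((k : ℝ) + 1) * t)
          ≤ (2 * (((k : ℝ) + 1) * t) / π + 1 / π ^ 2) *
            (r ^ (k + 1) / (1 - r ^ (k + 1))) := hb
        _ ≤ ((2 * t / π + 1 / π ^ 2) * ((k : ℝ) + 1)) * (r ^ (k + 1) / (1 - r)) := by
            apply mul_le_mul hcoef hfrac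
              (div_nonneg (by positivity) (by nlinarith [hE1]))
            have hkc : (0:ℝ) ≤ (k : ℝ) := Nat.cast_nonneg k
            have h2t : 0 ≤ 2 * t / π := by positivity
            have h1p : 0 ≤ 1 / π ^ 2 := by positivity
            nlinarith [mul_nonneg h2t hkc, mul_nonneg h1p hkc]
        _ = ((2 * t / π + 1 / π ^ 2) / (1 - r)) * (((k : ℝ) + 1) * r ^ (k + 1)) := by
            field_simp
    · exact summable_aux hr0.le hr1 _
  -- uniform bound for derivatives on Ioi (t/2)
  set D : ℝ := 2 / (π * (1 - Real.exp (-(π * (t / 2))))) with hDdef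
  have hD0 : 0 ≤ D := by
    rw [hDdef]
    exact le_of_lt (div_pos two_pos (mul_pos hπ (by linarith [hρ1])))
  have hbound : ∀ (n : ℕ) (x : ℝ), x ∈ Set.Ioi (t / 2) →
      ‖-((( n : ℝ) + 1) * phi (((n : ℝ) + 1) * x))‖ ≤ D * (((n : ℝ) + 1) * ρ ^ (n + 1)) := by
    intro n x hx
    rw [Set.mem_Ioi] at hx
    have hx0 : 0 < x := lt_trans (by linarith) hx
    have hs : (0:ℝ) < ((n : ℝ) + 1) * x := hkpos n x hx0
    have hms : t / 2 ≤ ((n : ℝ) + 1) * x := by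
      have hk1 : (1:ℝ) ≤ (n : ℝ) + 1 := by linarith [Nat.cast_nonneg (α := ℝ) n]
      nlinarith
    have hφb := phi_bound (by linarith : (0:ℝ) < t / 2) hms
    have hexp : Real.exp (-(π * (((n : ℝ) + 1) * x))) ≤ ρ ^ (n + 1) := by
      have : ρ ^ (n + 1) = Real.exp (-(π * (((n : ℝ) + 1) * (t / 2)))) := by
        rw [hρdef, ← Real.exp_nat_mul]
        congr 1
        push_cast
        ring
      rw [this]
      apply Real.exp_le_exp.2
      have h9 : π * (((n : ℝ) + 1) * (t / 2)) ≤ π * (((n : ℝ) + 1) * x) := by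
        apply mul_le_mul_of_nonneg_left _ hπ.le
        apply mul_le_mul_of_nonneg_left hx.le (by positivity)
      linarith
    rw [norm_neg, Real.norm_eq_abs,
      abs_of_nonneg (mul_nonneg (by positivity) (phi_nonneg hs))]
    calc ((n : ℝ) + 1) * phi (((n : ℝ) + 1) * x)
        ≤ ((n : ℝ) + 1) * (D * Real.exp (-(π * (((n : ℝ) + 1) * x)))) := by
          apply mul_le_mul_of_nonneg_left _ (by positivity)
          exact le_trans hφb (by rw [hDdef])
      _ ≤ ((n : ℝ) + 1) * (D * ρ ^ (n + 1)) := by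
          apply mul_le_mul_of_nonneg_left _ (by positivity)
          exact mul_le_mul_of_nonneg_left hexp hD0
      _ = D * (((n : ℝ) + 1) * ρ ^ (n + 1)) := by ring
  have hu : Summable (fun n : ℕ => D * (((n : ℝ) + 1) * ρ ^ (n + 1))) :=
    summable_aux hρ0.le hρ1 D
  -- derivatives term by term
  have hg : ∀ (n : ℕ) (x : ℝ), x ∈ Set.Ioi (t / 2) →
      HasDerivAt (fun u : ℝ => V (((n : ℝ) + 1) * u))
        (-((( n : ℝ) + 1) * phi (((n : ℝ) + 1) * x))) x := by
    intro n x hx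
    rw [Set.mem_Ioi] at hx
    have hx0 : 0 < x := lt_trans (by linarith) hx
    have hs : (0:ℝ) < ((n : ℝ) + 1) * x := hkpos n x hx0
    have hlin : HasDerivAt (fun u : ℝ => ((n : ℝ) + 1) * u) ((n : ℝ) + 1) x := by
      simpa using (hasDerivAt_id x).const_mul ((n : ℝ) + 1)
    have h := (hasDerivAt_V hs).comp x hlin
    have heq : (-(phi (((n : ℝ) + 1) * x))) * ((n : ℝ) + 1)
        = -((( n : ℝ) + 1) * phi (((n : ℝ) + 1) * x)) := by ring
    rw [← heq]
    exact h
  have htmem : t ∈ Set.Ioi (t / 2) := by rw [Set.mem_Ioi]; linarith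
  -- summability of φ series from the bound at x = t
  have hφsum : Summable (fun k : ℕ => ((k : ℝ) + 1) * phi (((k : ℝ) + 1) * t)) := by
    apply Summable.of_nonneg_of_le
      (fun k => mul_nonneg (by positivity) (phi_nonneg (hkpos k t ht)))
      (fun k => ?_) hu
    have := hbound k t htmem
    rwa [norm_neg, Real.norm_eq_abs,
      abs_of_nonneg (mul_nonneg (by positivity) (phi_nonneg (hkpos k t ht)))] at this
  refine ⟨hVsum, hφsum, ?_⟩
  have hderiv := hasDerivAt_tsum_of_isPreconnected hu isOpen_Ioi
    (isPreconnected_Ioi) hg hbound htmem hVsum htmem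
  have : (∑' n : ℕ, -((( n : ℝ) + 1) * phi (((n : ℝ) + 1) * t))) =
      -(∑' k : ℕ, ((k : ℝ) + 1) * phi (((k : ℝ) + 1) * t)) := tsum_neg
  rwa [this] at hderiv
end

section
/- (Head–Louat equilibrium identity, subcritical regime.) Let ℓ > 0 and let ρ(y) = √((ℓ−y)/y) for y ∈ (0,ℓ). Then for every x ∈ (0,ℓ) the Cauchy principal value of ∫₀^ℓ ρ(y)/(x−y) dy exists and equals π; i.e. the limit as ε → 0⁺ of ∫_{(0,ℓ)∖(x−ε,x+ε)} √((ℓ−y)/y)/(x−y) dy equals π. In particular ρ solves the singular integral equilibrium equation of the subcritical regime with constant right-hand side. -/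
open Real Filter MeasureTheory Set

noncomputable def HL14F (ℓ x y : ℝ) : ℝ :=
  2 * Real.arcsin (Real.sqrt (y / ℓ)) +
    Real.sqrt ((ℓ - x) / x) *
      Real.log ((Real.sqrt (x * (ℓ - y)) + Real.sqrt ((ℓ - x) * y)) /
        (Real.sqrt (x * (ℓ - y)) - Real.sqrt ((ℓ - x) * y)))

lemma HL14_arcsin_deriv {ℓ y : ℝ} (hy : y ∈ Ioo 0 ℓ) :
    HasDerivAt (fun t : ℝ => 2 * Real.arcsin (Real.sqrt (t / ℓ)))
      (1 / Real.sqrt (y * (ℓ - y))) y := by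
  obtain ⟨hy0, hyl⟩ := hy
  have hℓ : 0 < ℓ := hy0.trans hyl
  have hq0 : 0 < y / ℓ := div_pos hy0 hℓ
  have hq1 : y / ℓ < 1 := (div_lt_one hℓ).2 hyl
  have hz1 : Real.sqrt (y / ℓ) < 1 := by
    rw [show (1:ℝ) = Real.sqrt 1 by simp]
    exact Real.sqrt_lt_sqrt hq0.le hq1
  have hz0 : 0 < Real.sqrt (y / ℓ) := Real.sqrt_pos.2 hq0
  have h1 : HasDerivAt (fun t : ℝ => t / ℓ) (1 / ℓ) y := by
    simpa using (hasDerivAt_id y).div_const ℓ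
  have h2 : HasDerivAt (fun t : ℝ => Real.sqrt (t / ℓ))
      (1 / (2 * Real.sqrt (y / ℓ)) * (1 / ℓ)) y :=
    (Real.hasDerivAt_sqrt hq0.ne').comp y h1
  have h3 := (Real.hasDerivAt_arcsin (by linarith : Real.sqrt (y / ℓ) ≠ -1)
    hz1.ne).comp y h2
  have h4 := h3.const_mul 2
  refine h4.congr_deriv ?_
  symm
  have hsq : Real.sqrt (y / ℓ) ^ 2 = y / ℓ := Real.sq_sqrt hq0.le
  rw [hsq]
  have e1 : 1 - y / ℓ = (ℓ - y) / ℓ := by field_simp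
  rw [e1]
  have hly : 0 < ℓ - y := by linarith
  have e2 : Real.sqrt ((ℓ - y) / ℓ) * Real.sqrt (y / ℓ) = Real.sqrt (y * (ℓ - y)) / ℓ := by
    rw [← Real.sqrt_mul (by positivity)]
    rw [show (ℓ - y) / ℓ * (y / ℓ) = y * (ℓ - y) / ℓ ^ 2 by ring]
    rw [Real.sqrt_div (by positivity) (ℓ ^ 2), Real.sqrt_sq hℓ.le]
  have p1 : 0 < Real.sqrt ((ℓ - y) / ℓ) := Real.sqrt_pos.2 (by positivity)
  have p2 : 0 < Real.sqrt (y / ℓ) := hz0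
  have e3 : Real.sqrt ((ℓ - y) / ℓ) * Real.sqrt (y / ℓ) * ℓ = Real.sqrt (y * (ℓ - y)) := by
    rw [e2, div_mul_cancel₀ _ hℓ.ne']
  rw [← e3]
  field_simp

lemma HL14_hasDerivAt {ℓ x y : ℝ} (hx : x ∈ Ioo 0 ℓ) (hy : y ∈ Ioo 0 ℓ) (hxy : y ≠ x) :
    HasDerivAt (HL14F ℓ x) (Real.sqrt ((ℓ - y) / y) / (x - y)) y := by
  obtain ⟨hx0, hxl⟩ := hx
  obtain ⟨hy0, hyl⟩ := hy
  have hly : 0 < ℓ - y := by linarith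
  have hlx : 0 < ℓ - x := by linarith
  set a := Real.sqrt (x * (ℓ - y)) with ha_def
  set b := Real.sqrt ((ℓ - x) * y) with hb_def
  set s := Real.sqrt (y * (ℓ - y)) with hs_def
  set c := Real.sqrt ((ℓ - x) / x) with hc_def
  have ha : 0 < a := Real.sqrt_pos.2 (by positivity)
  have hb : 0 < b := Real.sqrt_pos.2 (by positivity)
  have hs : 0 < s := Real.sqrt_pos.2 (by positivity)
  have hc : 0 < c := Real.sqrt_pos.2 (by positivity)
  have ha2 : a ^ 2 = x * (ℓ - y) := Real.sq_sqrt (by positivity)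
  have hb2 : b ^ 2 = (ℓ - x) * y := Real.sq_sqrt (by positivity)
  have hs2 : s ^ 2 = y * (ℓ - y) := Real.sq_sqrt (by positivity)
  have hc2 : c ^ 2 = (ℓ - x) / x := Real.sq_sqrt (by positivity)
  have hxy' : x - y ≠ 0 := sub_ne_zero.2 (Ne.symm hxy)
  have hab : a - b ≠ 0 := by
    intro h
    have : a = b := by linarith
    have h2 : x * (ℓ - y) = (ℓ - x) * y := by rw [← ha2, ← hb2, this]
    apply hxy'
    nlinarith
  have habc : a * b = c * x * s := by
    have h1 : a * b = Real.sqrt (x * (ℓ - y) * ((ℓ - x) * y)) := by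
      rw [ha_def, hb_def, ← Real.sqrt_mul (by positivity)]
    have h2 : c * x = Real.sqrt ((ℓ - x) * x) := by
      rw [show (ℓ - x) * x = (ℓ - x) / x * x ^ 2 by field_simp,
        Real.sqrt_mul (div_nonneg hlx.le hx0.le) (x ^ 2), Real.sqrt_sq hx0.le, hc_def]
    rw [h1, h2, hs_def, ← Real.sqrt_mul (by positivity)]
    congr 1
    ring
  -- derivative of a
  have hA : HasDerivAt (fun t : ℝ => Real.sqrt (x * (ℓ - t))) (1 / (2 * a) * (-x)) y := by
    have h1 : HasDerivAt (fun t : ℝ => x * (ℓ - t)) (-x) y := by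
      simpa using ((hasDerivAt_id y).const_sub ℓ).const_mul x
    exact (Real.hasDerivAt_sqrt (by positivity)).comp y h1
  have hB : HasDerivAt (fun t : ℝ => Real.sqrt ((ℓ - x) * t)) (1 / (2 * b) * (ℓ - x)) y := by
    have h1 : HasDerivAt (fun t : ℝ => (ℓ - x) * t) (ℓ - x) y := by
      simpa using (hasDerivAt_id y).const_mul (ℓ - x)
    exact (Real.hasDerivAt_sqrt (by positivity)).comp y h1
  have hQ : HasDerivAt (fun t : ℝ =>
      (Real.sqrt (x * (ℓ - t)) + Real.sqrt ((ℓ - x) * t)) /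
        (Real.sqrt (x * (ℓ - t)) - Real.sqrt ((ℓ - x) * t)))
      (((1 / (2 * a) * (-x) + 1 / (2 * b) * (ℓ - x)) * (a - b) -
        (a + b) * (1 / (2 * a) * (-x) - 1 / (2 * b) * (ℓ - x))) / (a - b) ^ 2) y :=
    (hA.add hB).div (hA.sub hB) hab
  have hquot : (a + b) / (a - b) ≠ 0 := div_ne_zero (by positivity) hab
  have hL := (hQ.log hquot).const_mul c
  have hfinal := (HL14_arcsin_deriv ⟨hy0, hyl⟩).add hL
  refine hfinal.congr_deriv ?_
  symm
  have key : Real.sqrt ((ℓ - y) / y) = (ℓ - y) / s := by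
    rw [eq_div_iff hs.ne', hs_def, ← Real.sqrt_mul (by positivity)]
    rw [show (ℓ - y) / y * (y * (ℓ - y)) = (ℓ - y) ^ 2 by field_simp]
    exact Real.sqrt_sq hly.le
  have step1 : (1 / (2 * a) * (-x) + 1 / (2 * b) * (ℓ - x)) * (a - b) -
      (a + b) * (1 / (2 * a) * (-x) - 1 / (2 * b) * (ℓ - x)) = x * (ℓ - x) * ℓ / (a * b) := by
    have e : (1 / (2 * a) * (-x) + 1 / (2 * b) * (ℓ - x)) * (a - b) -
        (a + b) * (1 / (2 * a) * (-x) - 1 / (2 * b) * (ℓ - x)) =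
        (x * b ^ 2 + (ℓ - x) * a ^ 2) / (a * b) := by
      field_simp
      ring
    rw [e, ha2, hb2]
    congr 1
    ring
  rw [key, step1]
  simp only [← ha_def, ← hb_def, ← hs_def]
  have e4 : (a - b) * (a + b) = ℓ * (x - y) := by linear_combination ha2 - hb2
  rw [div_div, div_div]
  rw [show (a - b) ^ 2 * ((a + b) / (a - b)) = (a - b) * (a + b) by
    field_simp]
  rw [e4, habc]
  have hl0 : (0:ℝ) < ℓ := lt_trans hy0 hyl
  field_simp
  ring

lemma HL14F_zero {ℓ x : ℝ} (hx : x ∈ Ioo 0 ℓ) : HL14F ℓ x 0 = 0 := by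
  obtain ⟨hx0, hxl⟩ := hx
  have h : Real.sqrt (x * ℓ) ≠ 0 :=
    (Real.sqrt_pos.2 (mul_pos hx0 (by linarith))).ne'
  rw [HL14F]
  simp only [zero_div, Real.sqrt_zero, Real.arcsin_zero, mul_zero, sub_zero, add_zero,
    zero_add]
  rw [div_self h, Real.log_one, mul_zero]

lemma HL14F_ell {ℓ x : ℝ} (hℓ : 0 < ℓ) (hx : x ∈ Ioo 0 ℓ) : HL14F ℓ x ℓ = Real.pi := by
  obtain ⟨hx0, hxl⟩ := hx
  have hb : (0:ℝ) < Real.sqrt ((ℓ - x) * ℓ) := Real.sqrt_pos.2 (by nlinarith)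
  have h1 : Real.sqrt (ℓ / ℓ) = 1 := by rw [div_self hℓ.ne', Real.sqrt_one]
  have h2 : (0 + Real.sqrt ((ℓ - x) * ℓ)) / (0 - Real.sqrt ((ℓ - x) * ℓ)) = -1 := by
    rw [zero_add, zero_sub, div_neg, div_self hb.ne']
  simp only [HL14F, h1, Real.arcsin_one, sub_self, mul_zero, Real.sqrt_zero, h2]
  rw [show (-1 : ℝ) = -(1:ℝ) from rfl, Real.log_neg_eq_log, Real.log_one]
  ring

lemma HL14F_contOn {ℓ x : ℝ} {S : Set ℝ}
    (hne : ∀ y ∈ S, Real.sqrt (x * (ℓ - y)) - Real.sqrt ((ℓ - x) * y) ≠ 0)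
    (hpos : ∀ y ∈ S, Real.sqrt (x * (ℓ - y)) + Real.sqrt ((ℓ - x) * y) ≠ 0) :
    ContinuousOn (HL14F ℓ x) S := by
  have cA : Continuous fun y : ℝ => Real.sqrt (x * (ℓ - y)) := by fun_prop
  have cB : Continuous fun y : ℝ => Real.sqrt ((ℓ - x) * y) := by fun_prop
  have c1 : Continuous fun y : ℝ => 2 * Real.arcsin (Real.sqrt (y / ℓ)) :=
    continuous_const.mul (Real.continuous_arcsin.comp
      (Real.continuous_sqrt.comp (continuous_id.div_const ℓ)))
  apply c1.continuousOn.add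
  apply continuousOn_const.mul
  apply ContinuousOn.log
  · exact (cA.continuousOn.add cB.continuousOn).div (cA.continuousOn.sub cB.continuousOn) hne
  · exact fun y hy => div_ne_zero (hpos y hy) (hne y hy)

lemma HL14_intgr {ℓ x ε : ℝ} (hℓ : 0 < ℓ) (hε : 0 < ε) (hεx : ε < x) :
    IntervalIntegrable (fun y => Real.sqrt ((ℓ - y) / y) / (x - y)) volume 0 (x - ε) := by
  have hbd : IntervalIntegrable (fun y : ℝ => Real.sqrt ℓ / ε * y ^ (-(1/2) : ℝ))
      volume 0 (x - ε) :=
    (intervalIntegral.intervalIntegrable_rpow' (by norm_num)).const_mul _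
  apply hbd.mono_fun
  · apply Measurable.aestronglyMeasurable
    exact (Real.continuous_sqrt.measurable.comp ((measurable_const.sub measurable_id).div
      measurable_id)).div (measurable_const.sub measurable_id)
  · rw [Set.uIoc_of_le (by linarith : (0:ℝ) ≤ x - ε)]
    filter_upwards [ae_restrict_mem measurableSet_Ioc] with y hy
    obtain ⟨hy0, hyx⟩ := hy
    have hxy : ε ≤ x - y := by linarith
    have hfpos : 0 ≤ Real.sqrt ((ℓ - y) / y) / (x - y) :=
      div_nonneg (Real.sqrt_nonneg _) (by linarith)
    have hrp : y ^ (-(1/2) : ℝ) = 1 / Real.sqrt y := by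
      rw [Real.rpow_neg hy0.le, Real.sqrt_eq_rpow]
      simp
    have hgpos : 0 ≤ Real.sqrt ℓ / ε * y ^ (-(1/2) : ℝ) := by
      rw [hrp]; positivity
    rw [Real.norm_eq_abs, Real.norm_eq_abs, abs_of_nonneg hfpos, abs_of_nonneg hgpos, hrp]
    have h1 : Real.sqrt ((ℓ - y) / y) ≤ Real.sqrt ℓ / Real.sqrt y := by
      rw [← Real.sqrt_div hℓ.le]
      apply Real.sqrt_le_sqrt
      gcongr <;> linarith
    calc Real.sqrt ((ℓ - y) / y) / (x - y)
        = Real.sqrt ((ℓ - y) / y) * (1 / (x - y)) := by ring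
      _ ≤ Real.sqrt ℓ / Real.sqrt y * (1 / ε) := by
          apply mul_le_mul h1 (one_div_le_one_div_of_le hε hxy)
            (div_nonneg zero_le_one (by linarith)) (by positivity)
      _ = Real.sqrt ℓ / ε * (1 / Real.sqrt y) := by ring

lemma HL14_left {ℓ x ε : ℝ} (hℓ : 0 < ℓ) (hx : x ∈ Ioo 0 ℓ) (hε : 0 < ε) (hεx : ε < x) :
    ∫ y in (0:ℝ)..(x - ε), Real.sqrt ((ℓ - y) / y) / (x - y)
      = HL14F ℓ x (x - ε) - HL14F ℓ x 0 := by
  obtain ⟨hx0, hxl⟩ := hx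
  refine intervalIntegral.integral_eq_sub_of_hasDerivAt_of_le (f := HL14F ℓ x)
    (by linarith) ?_ ?_ ?_
  · apply HL14F_contOn
    · intro y hy
      obtain ⟨hy0, hyx⟩ := hy
      have hlt : Real.sqrt ((ℓ - x) * y) < Real.sqrt (x * (ℓ - y)) := by
        apply Real.sqrt_lt_sqrt (by nlinarith)
        nlinarith
      exact sub_ne_zero.2 hlt.ne'
    · intro y hy
      obtain ⟨hy0, hyx⟩ := hy
      have : 0 < Real.sqrt (x * (ℓ - y)) := Real.sqrt_pos.2 (by nlinarith)
      positivity
  · intro y hy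
    obtain ⟨hy0, hyx⟩ := hy
    exact HL14_hasDerivAt ⟨hx0, hxl⟩ ⟨hy0, by linarith⟩ (by linarith)
  · exact HL14_intgr hℓ hε hεx

lemma HL14_right {ℓ x ε : ℝ} (hℓ : 0 < ℓ) (hx : x ∈ Ioo 0 ℓ) (hε : 0 < ε) (hεl : ε < ℓ - x) :
    ∫ y in (x + ε)..ℓ, Real.sqrt ((ℓ - y) / y) / (x - y)
      = HL14F ℓ x ℓ - HL14F ℓ x (x + ε) := by
  obtain ⟨hx0, hxl⟩ := hx
  have hcf : ContinuousOn (fun y => Real.sqrt ((ℓ - y) / y) / (x - y)) (Icc (x + ε) ℓ) := by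
    apply ContinuousOn.div
    · apply Real.continuous_sqrt.comp_continuousOn
      apply ContinuousOn.div (by fun_prop) (by fun_prop)
      intro y hy h
      rw [h] at hy
      have := hy.1
      linarith
    · fun_prop
    · intro y hy h
      have h1 := hy.1
      have : x = y := sub_eq_zero.1 h
      linarith
  refine intervalIntegral.integral_eq_sub_of_hasDerivAt_of_le (f := HL14F ℓ x)
    (by linarith) ?_ ?_ ?_
  · apply HL14F_contOn
    · intro y hy
      obtain ⟨hy0, hyl⟩ := hy
      have hlt : Real.sqrt (x * (ℓ - y)) < Real.sqrt ((ℓ - x) * y) := by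
        apply Real.sqrt_lt_sqrt (by nlinarith)
        nlinarith
      exact sub_ne_zero.2 hlt.ne
    · intro y hy
      obtain ⟨hy0, hyl⟩ := hy
      have : 0 < Real.sqrt ((ℓ - x) * y) := Real.sqrt_pos.2 (by nlinarith)
      positivity
  · intro y hy
    obtain ⟨hy0, hyl⟩ := hy
    exact HL14_hasDerivAt ⟨hx0, hxl⟩ ⟨by linarith, hyl⟩ (by linarith)
  · exact ContinuousOn.intervalIntegrable
      (by rw [Set.uIcc_of_le (by linarith : x + ε ≤ ℓ)]; exact hcf)

noncomputable def HL14G (ℓ x y : ℝ) : ℝ :=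
  2 * Real.arcsin (Real.sqrt (y / ℓ)) +
    Real.sqrt ((ℓ - x) / x) *
      (2 * Real.log (Real.sqrt (x * (ℓ - y)) + Real.sqrt ((ℓ - x) * y)))

lemma HL14_FG {ℓ x y : ℝ} (hx : x ∈ Ioo 0 ℓ) (hy : y ∈ Ioo 0 ℓ) (hxy : y ≠ x) :
    HL14F ℓ x y = HL14G ℓ x y - Real.sqrt ((ℓ - x) / x) * Real.log ℓ
      - Real.sqrt ((ℓ - x) / x) * Real.log (x - y) := by
  obtain ⟨hx0, hxl⟩ := hx
  obtain ⟨hy0, hyl⟩ := hy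
  have hly : 0 < ℓ - y := by linarith
  have hlx : 0 < ℓ - x := by linarith
  set a := Real.sqrt (x * (ℓ - y)) with ha_def
  set b := Real.sqrt ((ℓ - x) * y) with hb_def
  have ha : 0 < a := Real.sqrt_pos.2 (by positivity)
  have hb : 0 < b := Real.sqrt_pos.2 (by positivity)
  have ha2 : a ^ 2 = x * (ℓ - y) := Real.sq_sqrt (by positivity)
  have hb2 : b ^ 2 = (ℓ - x) * y := Real.sq_sqrt (by positivity)
  have hxy' : x - y ≠ 0 := sub_ne_zero.2 (Ne.symm hxy)
  have hab : a - b ≠ 0 := by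
    intro h
    have : a = b := by linarith
    have h2 : x * (ℓ - y) = (ℓ - x) * y := by rw [← ha2, ← hb2, this]
    apply hxy'
    nlinarith
  have hl0 : (0:ℝ) < ℓ := lt_trans hy0 hyl
  have key : (a + b) / (a - b) = (a + b) ^ 2 / (ℓ * (x - y)) := by
    rw [div_eq_div_iff hab (mul_ne_zero hl0.ne' hxy')]
    linear_combination (a + b) * hb2 - (a + b) * ha2
  rw [HL14F, HL14G, key, Real.log_div (by positivity) (mul_ne_zero hl0.ne' hxy'),
    Real.log_mul hl0.ne' hxy', Real.log_pow]
  push_cast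
  ring

/-- (Head–Louat equilibrium identity, subcritical regime.) For `ℓ > 0`, the Head–Louat
pile-up density `ρ(y) = √((ℓ−y)/y)` on `(0,ℓ)` satisfies, for every `x ∈ (0,ℓ)`: the
Cauchy principal value of `∫₀^ℓ ρ(y)/(x−y) dy` exists and equals `π`, i.e. the limit as
`ε → 0⁺` of `∫_{(0,ℓ)∖(x−ε,x+ε)} √((ℓ−y)/y)/(x−y) dy` equals `π`. -/
theorem stmt14 (ℓ : ℝ) (hℓ : 0 < ℓ) (x : ℝ) (hx : x ∈ Set.Ioo 0 ℓ) :
    Tendsto (fun ε : ℝ =>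
        ∫ y in Set.Ioo 0 ℓ \ Set.Ioo (x - ε) (x + ε), Real.sqrt ((ℓ - y) / y) / (x - y))
      (nhdsWithin 0 (Set.Ioi 0)) (nhds Real.pi) := by
  obtain ⟨hx0, hxl⟩ := hx
  have hlx : 0 < ℓ - x := by linarith
  set c := Real.sqrt ((ℓ - x) / x) with hc_def
  -- limit of the regularized expression
  have hGc : ContinuousAt (HL14G ℓ x) x := by
    apply ContinuousAt.add
    · exact (continuous_const.mul (Real.continuous_arcsin.comp
        (Real.continuous_sqrt.comp (continuous_id.div_const ℓ)))).continuousAt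
    · apply ContinuousAt.mul continuousAt_const
      apply ContinuousAt.mul continuousAt_const
      have hne : Real.sqrt (x * (ℓ - x)) + Real.sqrt ((ℓ - x) * x) ≠ 0 := by
        have : 0 < Real.sqrt (x * (ℓ - x)) := Real.sqrt_pos.2 (by positivity)
        positivity
      have hcab : ContinuousAt
          (fun y : ℝ => Real.sqrt (x * (ℓ - y)) + Real.sqrt ((ℓ - x) * y)) x := by fun_prop
      exact ContinuousAt.comp (g := Real.log) (Real.continuousAt_log hne) hcab
  have h1 : Tendsto (fun ε : ℝ => x - ε) (nhdsWithin 0 (Set.Ioi 0)) (nhds x) := by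
    have : Tendsto (fun ε : ℝ => x - ε) (nhds 0) (nhds x) := by
      simpa using ((continuous_sub_left x).tendsto (0:ℝ))
    exact this.mono_left nhdsWithin_le_nhds
  have h2 : Tendsto (fun ε : ℝ => x + ε) (nhdsWithin 0 (Set.Ioi 0)) (nhds x) := by
    have : Tendsto (fun ε : ℝ => x + ε) (nhds 0) (nhds x) := by
      simpa using ((continuous_add_left x).tendsto (0:ℝ))
    exact this.mono_left nhdsWithin_le_nhds
  have hGt : Tendsto (fun ε : ℝ => Real.pi + (HL14G ℓ x (x - ε) - HL14G ℓ x (x + ε)))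
      (nhdsWithin 0 (Set.Ioi 0)) (nhds Real.pi) := by
    have := ((hGc.tendsto.comp h1).sub (hGc.tendsto.comp h2)).const_add Real.pi
    simpa using this
  apply hGt.congr'
  filter_upwards [Ioo_mem_nhdsGT_of_mem (Set.mem_Ico.2 ⟨le_refl (0:ℝ), lt_min hx0 hlx⟩)]
    with ε hε
  obtain ⟨hε0, hεm⟩ := hε
  have hεx : ε < x := lt_of_lt_of_le hεm (min_le_left _ _)
  have hεl : ε < ℓ - x := lt_of_lt_of_le hεm (min_le_right _ _)
  -- decompose the set
  have hset : Set.Ioo 0 ℓ \ Set.Ioo (x - ε) (x + ε)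
      = Set.Ioc 0 (x - ε) ∪ Set.Ico (x + ε) ℓ := by
    ext y
    simp only [Set.mem_diff, Set.mem_Ioo, Set.mem_union, Set.mem_Ioc, Set.mem_Ico,
      not_and, not_lt]
    constructor
    · rintro ⟨⟨hy0, hyl⟩, h⟩
      by_cases hc : x - ε < y
      · exact Or.inr ⟨h hc, hyl⟩
      · exact Or.inl ⟨hy0, not_lt.1 hc⟩
    · rintro (⟨hy0, hyx⟩ | ⟨hyx, hyl⟩)
      · exact ⟨⟨hy0, by linarith⟩, fun h => by linarith⟩
      · exact ⟨⟨by linarith, hyl⟩, fun h => by linarith⟩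
  rw [hset]
  have hIl : IntegrableOn (fun y => Real.sqrt ((ℓ - y) / y) / (x - y))
      (Set.Ioc 0 (x - ε)) volume := (HL14_intgr hℓ hε0 hεx).1
  have hcf : ContinuousOn (fun y => Real.sqrt ((ℓ - y) / y) / (x - y)) (Set.Icc (x + ε) ℓ) := by
    apply ContinuousOn.div
    · apply Real.continuous_sqrt.comp_continuousOn
      apply ContinuousOn.div (by fun_prop) (by fun_prop)
      intro y hy h
      rw [h] at hy
      have := hy.1
      linarith
    · fun_prop
    · intro y hy h
      have h1 := hy.1
      have : x = y := sub_eq_zero.1 h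
      linarith
  have hIr : IntegrableOn (fun y => Real.sqrt ((ℓ - y) / y) / (x - y))
      (Set.Ico (x + ε) ℓ) volume :=
    (hcf.integrableOn_compact isCompact_Icc).mono_set Set.Ico_subset_Icc_self
  rw [MeasureTheory.setIntegral_union (by
      rw [Set.disjoint_left]
      rintro y ⟨_, h1⟩ ⟨h2, _⟩
      linarith) measurableSet_Ico hIl hIr]
  have e1 : ∫ y in Set.Ioc 0 (x - ε), Real.sqrt ((ℓ - y) / y) / (x - y)
      = ∫ y in (0:ℝ)..(x - ε), Real.sqrt ((ℓ - y) / y) / (x - y) :=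
    (intervalIntegral.integral_of_le (by linarith)).symm
  have e2 : ∫ y in Set.Ico (x + ε) ℓ, Real.sqrt ((ℓ - y) / y) / (x - y)
      = ∫ y in (x + ε)..ℓ, Real.sqrt ((ℓ - y) / y) / (x - y) := by
    rw [MeasureTheory.setIntegral_congr_set Ico_ae_eq_Ioc,
      intervalIntegral.integral_of_le (by linarith)]
  rw [e1, e2, HL14_left hℓ ⟨hx0, hxl⟩ hε0 hεx, HL14_right hℓ ⟨hx0, hxl⟩ hε0 hεl,
    HL14F_zero ⟨hx0, hxl⟩, HL14F_ell hℓ ⟨hx0, hxl⟩]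
  rw [HL14_FG ⟨hx0, hxl⟩ ⟨by linarith, by linarith⟩ (by linarith),
    HL14_FG ⟨hx0, hxl⟩ ⟨by linarith, by linarith⟩ (by linarith)]
  rw [show x - (x - ε) = ε by ring, show x - (x + ε) = -ε by ring, Real.log_neg_eq_log]
  ring
end
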